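/- Let U ⊆ ℝ^d be open, f : U → ℝ^m twice continuously differentiable with bounded first and second partial derivatives on U, τ = (τ_1,…,τ_m) ∈ ℝ_{>0}^m with Σ_{i=1}^m τ_i < 1, and set τ̃ = (1/m)Στ_i. Then for every x ∈ U there exists Q_0 ∈ ℕ such that for all Q ≥ Q_0 there is (p_1,…,p_n,q) ∈ ℤ^n × ℕ (n = d + m) with 1 ≤ q ≤ Q, (p_1/q,…,p_d/q) ∈ U, |x_i - p_i/q| < 4^{m/d} / (q Q^{(1-τ̃m)/d}) for 1 ≤ i ≤ d, and |f_j(p_1/q,…,p_d/q) - p_{d+j}/q| < q^{-τ_j - 1}/2 for 1 ≤ j ≤ m. -/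

import Mathlib

open MeasureTheory Finset Submodule ENNReal in
lemma minkowski_forms {ι : Type*} [Fintype ι] [DecidableEq ι] [Nonempty ι]
    (M : Matrix ι ι ℝ) (hM : M.det = 1) (b : ι → ℝ) (hb : ∀ i, 0 < b i)
    (hvol : 1 < ∏ i, b i) :
    ∃ c : ι → ℤ, c ≠ 0 ∧ ∀ i, |M.mulVec (fun k => (c k : ℝ)) i| ≤ b i := by
  classical
  set A : (ι → ℝ) →ₗ[ℝ] (ι → ℝ) := Matrix.mulVecLin M with hA
  have hdet : LinearMap.det A = 1 := by
    rw [hA, ← Matrix.toLin'_apply', ← hM]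
    exact LinearMap.det_toLin' M
  set box : Set (ι → ℝ) := Set.pi Set.univ (fun i => Set.Icc (-(b i)) (b i)) with hbox
  set s : Set (ι → ℝ) := A ⁻¹' box with hs
  have hconv : Convex ℝ s := (convex_pi (fun i _ => convex_Icc _ _)).linear_preimage A
  have hsymm : ∀ y ∈ s, -y ∈ s := by
    intro y hy i _
    simp only [hs, Set.mem_preimage, map_neg] at hy ⊢
    have := hy i (Set.mem_univ i)
    simp only [Set.mem_Icc, Pi.neg_apply] at this ⊢
    constructor <;> linarith [this.1, this.2]
  have hμbox : volume box = ∏ i, ENNReal.ofReal (2 * b i) := by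
    rw [hbox, volume_pi, Measure.pi_pi]
    congr 1; ext i; rw [Real.volume_Icc]; ring_nf
  have hμs : volume s = ∏ i, ENNReal.ofReal (2 * b i) := by
    rw [hs, Measure.addHaar_preimage_linearMap volume (by rw [hdet]; norm_num), hdet, hμbox]
    simp
  have fund := ZSpan.isAddFundamentalDomain' (Pi.basisFun ℝ ι) (volume : Measure (ι → ℝ))
  have : Countable (span ℤ (Set.range (Pi.basisFun ℝ ι))).toAddSubgroup := by
    change Countable (span ℤ (Set.range (Pi.basisFun ℝ ι)))
    infer_instance
  have hμF : volume (ZSpan.fundamentalDomain (Pi.basisFun ℝ ι)) = 1 := by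
    rw [ZSpan.volume_fundamentalDomain]
    have h1 : (Matrix.of ⇑(Pi.basisFun ℝ ι)) = (1 : Matrix ι ι ℝ) := by
      ext i j
      simp [Matrix.one_apply, Pi.single_apply, eq_comm]
    rw [h1, Matrix.det_one]
    norm_num
  have hlt : volume (ZSpan.fundamentalDomain (Pi.basisFun ℝ ι))
      * 2 ^ (Module.finrank ℝ (ι → ℝ)) < volume s := by
    rw [hμF, one_mul, hμs, Module.finrank_fintype_fun_eq_card]
    have h2 : ∀ i : ι, ENNReal.ofReal (2 * b i) = 2 * ENNReal.ofReal (b i) := by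
      intro i
      rw [ENNReal.ofReal_mul (by norm_num : (0:ℝ) ≤ 2)]
      norm_num
    rw [Finset.prod_congr rfl (fun i _ => h2 i), Finset.prod_mul_distrib,
      Finset.prod_const, Finset.card_univ]
    have h1 : (1 : ℝ≥0∞) < ∏ i, ENNReal.ofReal (b i) := by
      rw [← ENNReal.ofReal_prod_of_nonneg (fun i _ => (hb i).le)]
      have := (ENNReal.ofReal_lt_ofReal_iff (lt_trans one_pos hvol)).mpr hvol
      simpa using this
    conv_lhs => rw [← mul_one ((2:ℝ≥0∞) ^ Fintype.card ι)]
    rw [ENNReal.mul_lt_mul_iff_right (pow_ne_zero _ two_ne_zero)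
      (ENNReal.pow_ne_top ENNReal.ofNat_ne_top)]
    exact h1
  obtain ⟨v, hv0, hvmem⟩ :=
    exists_ne_zero_mem_lattice_of_measure_mul_two_pow_lt_measure fund hsymm hconv hlt
  have hv1 : (v : ι → ℝ) ∈ span ℤ (Set.range ⇑(Pi.basisFun ℝ ι)) := by
    have := v.2
    rwa [Submodule.mem_toAddSubgroup] at this
  rw [mem_span_range_iff_exists_fun] at hv1
  obtain ⟨c, hc⟩ := hv1
  have hcv : (fun k => (c k : ℝ)) = ((v : ι → ℝ)) := by
    ext k
    rw [← hc]
    simp [Pi.basisFun_apply, Finset.sum_apply, Pi.single_apply]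
  refine ⟨c, ?_, ?_⟩
  · intro h0
    apply hv0
    have : ((v : ι → ℝ)) = 0 := by rw [← hcv, h0]; ext k; simp
    exact Subtype.ext this
  · intro i
    have := hvmem i (Set.mem_univ i)
    rw [Set.mem_Icc] at this
    rw [abs_le]
    have hAv : A (v : ι → ℝ) = M.mulVec (fun k => (c k : ℝ)) := by rw [hcv]; rfl
    rw [← hAv]
    exact ⟨by linarith [this.1], this.2⟩

open Finset in
lemma dirichlet_linear (d m : ℕ) (x : Fin d → ℝ) (F : Fin m → ℝ) (g : Fin m → Fin d → ℝ)
    (bt : ℝ) (bu : Fin d → ℝ) (bw : Fin m → ℝ)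
    (hbt : 0 < bt) (hbu : ∀ i, 0 < bu i) (hbw : ∀ j, 0 < bw j)
    (hvol : 1 < (bt * ∏ i, bu i) * ∏ j, bw j) :
    ∃ (t : ℤ) (p : Fin d → ℤ) (p' : Fin m → ℤ),
      (¬(t = 0 ∧ p = 0 ∧ p' = 0)) ∧ |(t : ℝ)| ≤ bt ∧
      (∀ i, |(t : ℝ) * x i - p i| ≤ bu i) ∧
      (∀ j, |(t : ℝ) * F j + ∑ i, g j i * ((p i : ℝ) - t * x i) - p' j| ≤ bw j) := by
  classical
  set P : Matrix (Unit ⊕ Fin d) (Unit ⊕ Fin d) ℝ :=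
    Matrix.fromBlocks 1 0 (fun i _ => -(x i)) 1 with hP
  set Q : Matrix (Fin m) (Unit ⊕ Fin d) ℝ :=
    fun j => Sum.elim (fun _ => -(F j) + ∑ i, g j i * x i) (fun i => -(g j i)) with hQ
  set M : Matrix ((Unit ⊕ Fin d) ⊕ Fin m) ((Unit ⊕ Fin d) ⊕ Fin m) ℝ :=
    Matrix.fromBlocks P 0 Q 1 with hM
  have hdet : M.det = 1 := by
    rw [hM, Matrix.det_fromBlocks_zero₁₂, hP, Matrix.det_one, mul_one]
    exact (Matrix.det_fromBlocks_zero₁₂ _ _ _).trans (by simp)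
  set b : (Unit ⊕ Fin d) ⊕ Fin m → ℝ := Sum.elim (Sum.elim (fun _ => bt) bu) bw with hb
  have hbpos : ∀ i, 0 < b i := by
    rintro ((_ | i) | j)
    · exact hbt
    · exact hbu i
    · exact hbw j
  have hprod : 1 < ∏ i, b i := by
    rw [hb, Fintype.prod_sum_type, Fintype.prod_sum_type]
    simpa using hvol
  obtain ⟨c, hc0, hcb⟩ := minkowski_forms M hdet b hbpos hprod
  set t : ℤ := c (Sum.inl (Sum.inl ())) with ht
  refine ⟨t, fun i => c (Sum.inl (Sum.inr i)), fun j => c (Sum.inr j),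
    ?_, ?_, ?_, ?_⟩
  · rintro ⟨h1, h2, h3⟩
    apply hc0
    funext k
    rcases k with (_ | i) | j
    · exact h1
    · exact congrFun h2 i
    · exact congrFun h3 j
  · have := hcb (Sum.inl (Sum.inl ()))
    rwa [show M.mulVec (fun k => (c k : ℝ)) (Sum.inl (Sum.inl ())) = (t : ℝ) by
      simp [hM, Matrix.mulVec, dotProduct, Matrix.fromBlocks, Matrix.of_apply, ht, Fintype.sum_sum_type, hP]] at this
  · intro i
    have := hcb (Sum.inl (Sum.inr i))
    rw [show M.mulVec (fun k => (c k : ℝ)) (Sum.inl (Sum.inr i)) =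
        -(x i) * (t : ℝ) + (c (Sum.inl (Sum.inr i)) : ℝ) by
      simp [hM, Matrix.mulVec, dotProduct, Matrix.fromBlocks, Matrix.of_apply, ht, Fintype.sum_sum_type, hP,
        Matrix.one_apply, Finset.sum_ite_eq']] at this
    show |(t : ℝ) * x i - (c (Sum.inl (Sum.inr i)) : ℝ)| ≤ bu i
    rw [show (t : ℝ) * x i - (c (Sum.inl (Sum.inr i)) : ℝ) =
      -(-(x i) * (t : ℝ) + (c (Sum.inl (Sum.inr i)) : ℝ)) by ring, abs_neg]
    exact this
  · intro j
    have := hcb (Sum.inr j)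
    rw [show M.mulVec (fun k => (c k : ℝ)) (Sum.inr j) =
        (-(F j) + ∑ i, g j i * x i) * (t : ℝ)
        + (∑ i, -(g j i) * (c (Sum.inl (Sum.inr i)) : ℝ)) + (c (Sum.inr j) : ℝ) by
      simp [hM, Matrix.mulVec, dotProduct, Matrix.fromBlocks, Matrix.of_apply, ht, Fintype.sum_sum_type, hQ,
        Matrix.one_apply, Finset.sum_ite_eq']] at this
    have expand : ∑ i, g j i * ((c (Sum.inl (Sum.inr i)) : ℝ) - (t : ℝ) * x i)
        = (∑ i, g j i * (c (Sum.inl (Sum.inr i)) : ℝ)) - (t : ℝ) * ∑ i, g j i * x i := by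
      rw [Finset.mul_sum, ← Finset.sum_sub_distrib]
      exact Finset.sum_congr rfl fun i _ => by ring
    have expand2 : ∑ i, -(g j i) * (c (Sum.inl (Sum.inr i)) : ℝ)
        = -∑ i, g j i * (c (Sum.inl (Sum.inr i)) : ℝ) := by
      rw [← Finset.sum_neg_distrib]
      exact Finset.sum_congr rfl fun i _ => by ring
    rw [expand2] at this
    simp only [hb, Sum.elim_inr] at this
    show |(t : ℝ) * F j + ∑ i, g j i * ((c (Sum.inl (Sum.inr i)) : ℝ) - (t : ℝ) * x i)
        - (c (Sum.inr j) : ℝ)| ≤ bw j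
    rw [expand, abs_le] at *
    constructor <;> [skip; skip] <;> linarith [this.1, this.2]

open Finset in
lemma opnorm_coord {d : ℕ} (L : (Fin d → ℝ) →L[ℝ] ℝ) (c : ℝ)
    (hc : ∀ i, |L (Pi.single i 1)| ≤ c) (v : Fin d → ℝ) :
    |L v| ≤ d * c * ‖v‖ := by
  classical
  have hv : v = ∑ i, v i • (Pi.single i 1 : Fin d → ℝ) := by
    ext k
    simp [Pi.single_apply]
  have hLv : L v = ∑ i, v i * L (Pi.single i 1) := by
    conv_lhs => rw [hv]
    rw [map_sum]
    simp
  calc |L v| = |∑ i, v i * L (Pi.single i 1)| := by rw [hLv]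
  _ ≤ ∑ i, |v i * L (Pi.single i 1)| := Finset.abs_sum_le_sum_abs _ _
  _ ≤ ∑ i : Fin d, ‖v‖ * c := by
        refine Finset.sum_le_sum fun i _ => ?_
        rw [abs_mul]
        have h1 : |v i| ≤ ‖v‖ := by
          have := norm_le_pi_norm v i
          simpa using this
        have h2 : |L (Pi.single i 1)| ≤ c := hc i
        have h0 : (0:ℝ) ≤ |v i| := abs_nonneg _
        nlinarith [abs_nonneg (L (Pi.single i 1)), norm_nonneg v]
  _ = d * c * ‖v‖ := by
        rw [Finset.sum_const, Finset.card_univ]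
        simp [mul_comm, mul_assoc, mul_left_comm]

open Finset in
lemma taylor_bound {d : ℕ} (U : Set (Fin d → ℝ)) (hU : IsOpen U)
    (φ : (Fin d → ℝ) → ℝ) (hφ : ContDiffOn ℝ 2 φ U)
    (C : ℝ) (hC0 : 0 ≤ C)
    (hC : ∀ z ∈ U, ∀ (i k : Fin d),
      |fderivWithin ℝ (fun y => fderivWithin ℝ φ U y (Pi.single i 1)) U z (Pi.single k 1)| ≤ C)
    (x y : Fin d → ℝ) (r : ℝ) (hball : Metric.closedBall x r ⊆ U)
    (hy : y ∈ Metric.closedBall x r) (hxU : x ∈ U) :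
    |φ y - φ x - ∑ i, fderivWithin ℝ φ U x (Pi.single i 1) * (y i - x i)|
      ≤ (C * d ^ 2 * ‖y - x‖) * ‖y - x‖ := by
  classical
  rcases eq_or_ne y x with rfl | hyx
  · simp
  have hρ : 0 < ‖y - x‖ := by
    rw [norm_pos_iff]
    exact sub_ne_zero.mpr hyx
  set ρ := ‖y - x‖ with hρdef
  set B : Set (Fin d → ℝ) := Metric.closedBall x ρ with hB
  have hBU : B ⊆ U := by
    refine le_trans ?_ hball
    apply Metric.closedBall_subset_closedBall
    simpa [Metric.mem_closedBall, dist_eq_norm] using hy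
  have hxB : x ∈ B := Metric.mem_closedBall_self hρ.le
  have hyB : y ∈ B := by simp [hB, Metric.mem_closedBall, dist_eq_norm, hρdef]
  -- differentiability of φ
  have hdiff : ∀ z ∈ U, DifferentiableAt ℝ φ z := fun z hz =>
    (hφ.contDiffAt (hU.mem_nhds hz)).differentiableAt (by norm_num)
  -- ψ i z = i-th partial of φ at z
  set ψ : Fin d → (Fin d → ℝ) → ℝ := fun i z => fderivWithin ℝ φ U z (Pi.single i 1) with hψ
  have hφ' : ContDiffOn ℝ 1 (fderivWithin ℝ φ U) U :=
    hφ.fderivWithin hU.uniqueDiffOn (by norm_num)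
  have hψdiff : ∀ i, ∀ z ∈ U, DifferentiableAt ℝ (ψ i) z := by
    intro i z hz
    have h1 : ContDiffOn ℝ 1 (ψ i) U := by
      exact (ContinuousLinearMap.apply ℝ ℝ (Pi.single i 1)).contDiff.comp_contDiffOn hφ'
    exact (h1.contDiffAt (hU.mem_nhds hz)).differentiableAt (by norm_num)
  -- Lipschitz bound for ψ i on B
  have hψlip : ∀ i, ∀ z ∈ B, |ψ i z - ψ i x| ≤ (d * C) * ρ := by
    intro i z hz
    have hbound : ∀ w ∈ B, ‖fderiv ℝ (ψ i) w‖ ≤ d * C := by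
      intro w hw
      refine ContinuousLinearMap.opNorm_le_bound _ (by positivity) fun v => ?_
      have key : ∀ k, |fderiv ℝ (ψ i) w (Pi.single k 1)| ≤ C := by
        intro k
        have := hC w (hBU hw) i k
        rw [fderivWithin_of_isOpen hU (hBU hw)] at this
        exact this
      have := opnorm_coord (fderiv ℝ (ψ i) w) C key v
      calc ‖fderiv ℝ (ψ i) w v‖ = |fderiv ℝ (ψ i) w v| := rfl
      _ ≤ d * C * ‖v‖ := this
  -- mean value
    have := Convex.norm_image_sub_le_of_norm_fderiv_le
      (fun w hw => hψdiff i w (hBU hw)) hbound (convex_closedBall x ρ) hxB hz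
    calc |ψ i z - ψ i x| = ‖ψ i z - ψ i x‖ := rfl
    _ ≤ (d * C) * ‖z - x‖ := this
    _ ≤ (d * C) * ρ := by
        have hzx : ‖z - x‖ ≤ ρ := by simpa [hB, Metric.mem_closedBall, dist_eq_norm] using hz
        have : (0:ℝ) ≤ d * C := by positivity
        nlinarith
  -- the linear map Lg
  set Lg : (Fin d → ℝ) →L[ℝ] ℝ := ∑ i, ψ i x • (ContinuousLinearMap.proj i) with hLg
  have hLgapply : ∀ v, Lg v = ∑ i, ψ i x * v i := by
    intro v
    rw [hLg]
    simp [ContinuousLinearMap.sum_apply]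
  have hLgcoord : ∀ k, Lg (Pi.single k 1) = ψ k x := by
    intro k
    rw [hLgapply]
    simp [Pi.single_apply]
  -- F = φ - Lg
  set F : (Fin d → ℝ) → ℝ := fun z => φ z - Lg z with hF
  have hFdiff : ∀ z ∈ U, DifferentiableAt ℝ F z := fun z hz =>
    ((hdiff z hz).sub (Lg.differentiable.differentiableAt))
  have hFderiv : ∀ z ∈ U, fderiv ℝ F z = fderiv ℝ φ z - Lg := by
    intro z hz
    rw [hF]
    rw [fderiv_fun_sub (hdiff z hz) (Lg.differentiable.differentiableAt)]
    congr 1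
    exact Lg.fderiv
  have hFbound : ∀ z ∈ B, ‖fderiv ℝ F z‖ ≤ d * (d * C * ρ) := by
    intro z hz
    rw [hFderiv z (hBU hz)]
    refine ContinuousLinearMap.opNorm_le_bound _ (by positivity) fun v => ?_
    have key : ∀ k, |(fderiv ℝ φ z - Lg) (Pi.single k 1)| ≤ d * C * ρ := by
      intro k
      rw [ContinuousLinearMap.sub_apply, hLgcoord]
      have h1 : fderiv ℝ φ z (Pi.single k 1) = ψ k z :=
        (DFunLike.congr_fun (fderivWithin_of_isOpen hU (hBU hz)) (Pi.single k 1)).symm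
      rw [h1]
      exact hψlip k z hz
    have := opnorm_coord (fderiv ℝ φ z - Lg) (d * C * ρ) key v
    calc ‖(fderiv ℝ φ z - Lg) v‖ = |(fderiv ℝ φ z - Lg) v| := rfl
    _ ≤ d * (d * C * ρ) * ‖v‖ := this
  have hMV := Convex.norm_image_sub_le_of_norm_fderiv_le
    (fun w hw => hFdiff w (hBU hw)) hFbound (convex_closedBall x ρ) hxB hyB
  have hgoal : φ y - φ x - ∑ i, fderivWithin ℝ φ U x (Pi.single i 1) * (y i - x i)
      = F y - F x := by
    show _ = (φ y - Lg y) - (φ x - Lg x)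
    have : Lg y - Lg x = ∑ i, ψ i x * (y i - x i) := by
      rw [hLgapply, hLgapply, ← Finset.sum_sub_distrib]
      exact Finset.sum_congr rfl fun i _ => by ring
    have h2 : ∑ i, fderivWithin ℝ φ U x (Pi.single i 1) * (y i - x i)
        = ∑ i, ψ i x * (y i - x i) := rfl
    rw [h2]
    linarith [this]
  rw [hgoal]
  calc |F y - F x| = ‖F y - F x‖ := rfl
  _ ≤ d * (d * C * ρ) * ‖y - x‖ := hMV
  _ = (C * d ^ 2 * ‖y - x‖) * ‖y - x‖ := by rw [← hρdef]; ring

set_option maxHeartbeats 1000000 in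
theorem stmt7 (d m : ℕ) (hd : 0 < d) (hm : 0 < m)
    (U : Set (Fin d → ℝ)) (hU : IsOpen U)
    (f : (Fin d → ℝ) → Fin m → ℝ) (hf : ContDiffOn ℝ 2 f U)
    (D C : ℝ)
    (hD : ∀ x ∈ U, ∀ (i : Fin d) (j : Fin m),
      |fderivWithin ℝ (fun y => f y j) U x (Pi.single i 1)| ≤ D)
    (hC : ∀ x ∈ U, ∀ (i k : Fin d) (j : Fin m),
      |fderivWithin ℝ (fun y => fderivWithin ℝ (fun z => f z j) U y (Pi.single i 1))
        U x (Pi.single k 1)| ≤ C)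
    (τ : Fin m → ℝ) (hτ : ∀ j, 0 < τ j) (hsum : ∑ j, τ j < 1) :
    ∀ x ∈ U, ∃ Q₀ : ℕ, ∀ Q : ℕ, Q₀ ≤ Q →
      ∃ (p : Fin d → ℤ) (p' : Fin m → ℤ) (q : ℕ), 1 ≤ q ∧ q ≤ Q ∧
        (fun i : Fin d => (p i : ℝ) / q) ∈ U ∧
        (∀ i : Fin d, |x i - (p i : ℝ) / q| <
          (4 : ℝ) ^ ((m : ℝ) / d) / (q * (Q : ℝ) ^ ((1 - ∑ j, τ j) / d))) ∧
        (∀ j : Fin m, |f (fun i : Fin d => (p i : ℝ) / q) j - (p' j : ℝ) / q| <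
          (q : ℝ) ^ (-(τ j) - 1) / 2) := by
  classical
  intro x hx
  -- basic quantities
  set S : ℝ := ∑ j, τ j with hS
  have hS0 : 0 < S := Finset.sum_pos (fun j _ => hτ j) ⟨⟨0, hm⟩, Finset.mem_univ _⟩
  have hd' : (0:ℝ) < d := by exact_mod_cast hd
  set α : ℝ := (1 - S) / d with hα
  have hα0 : 0 < α := by
    apply div_pos _ hd'
    linarith
  have hC0 : 0 ≤ C := le_trans (abs_nonneg _) (hC x hx ⟨0, hd⟩ ⟨0, hd⟩ ⟨0, hm⟩)
  set g : Fin m → Fin d → ℝ :=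
    fun j i => fderivWithin ℝ (fun y => f y j) U x (Pi.single i 1) with hg
  obtain ⟨r, hr0, hrU⟩ : ∃ r > 0, Metric.closedBall x r ⊆ U :=
    Metric.nhds_basis_closedBall.mem_iff.mp (hU.mem_nhds hx)
  set c4 : ℝ := (4:ℝ) ^ ((m:ℝ)/d) with hc4
  have hc41 : 1 ≤ c4 := Real.one_le_rpow (by norm_num) (by positivity)
  have hc40 : 0 < c4 := lt_of_lt_of_le one_pos hc41
  set K : ℝ := C * d^2 * c4 * c4 with hK
  have hK0 : 0 ≤ K := by positivity
  -- eventual conditions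
  have tend1 : Filter.Tendsto (fun Q : ℕ => c4 * (Q:ℝ) ^ (-α)) Filter.atTop (nhds 0) := by
    have := ((tendsto_rpow_neg_atTop hα0).comp tendsto_natCast_atTop_atTop).const_mul c4
    simpa using this
  have ev1 := tend1.eventually_lt_const (show (0:ℝ) < min 1 r by positivity)
  have tend2 : Filter.Tendsto (fun Q : ℕ => (Q:ℝ) ^ (2*α)) Filter.atTop Filter.atTop :=
    (tendsto_rpow_atTop (by positivity)).comp tendsto_natCast_atTop_atTop
  have ev2 := tend2.eventually_gt_atTop (4*K)
  have ev3 : ∀ᶠ Q : ℕ in Filter.atTop, 1 ≤ Q := Filter.eventually_ge_atTop 1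
  obtain ⟨Q₀, hQ₀⟩ := Filter.eventually_atTop.mp ((ev3.and (ev1.and ev2)))
  refine ⟨Q₀, fun Q hQ => ?_⟩
  obtain ⟨hQ1, hδsmall, hQ2α⟩ := hQ₀ Q hQ
  have hQ0 : (0:ℝ) < Q := by exact_mod_cast hQ1
  -- box bounds
  set δ : ℝ := c4 * (Q:ℝ) ^ (-α) with hδ
  have hδ0 : 0 < δ := by positivity
  have hδ1 : δ < 1 := lt_of_lt_of_le hδsmall (min_le_left _ _)
  have hδr : δ ≤ r := le_of_lt (lt_of_lt_of_le hδsmall (min_le_right _ _))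
  set lam : ℝ := ((Q:ℝ)/((Q:ℝ)+4⁻¹)) ^ ((d:ℝ)⁻¹) with hlam
  have hbase0 : 0 < (Q:ℝ)/((Q:ℝ)+4⁻¹) := by positivity
  have hbase1 : (Q:ℝ)/((Q:ℝ)+4⁻¹) < 1 := by
    rw [div_lt_one (by positivity)]
    linarith
  have hlam0 : 0 < lam := Real.rpow_pos_of_pos hbase0 _
  have hlam1 : lam < 1 := Real.rpow_lt_one hbase0.le hbase1 (by positivity)
  -- volume condition
  have hvol : 1 < (((Q:ℝ) + 2⁻¹) * ∏ _i : Fin d, (lam * δ))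
      * ∏ j : Fin m, ((Q:ℝ) ^ (-(τ j)) / 4) := by
    have e1 : ∏ _i : Fin d, (lam * δ) = lam^d * c4^d * ((Q:ℝ)^(-α))^d := by
      rw [Finset.prod_const, Finset.card_univ, Fintype.card_fin, hδ]
      ring
    have elam : lam^d = (Q:ℝ)/((Q:ℝ)+4⁻¹) := by
      rw [hlam, ← Real.rpow_natCast (((Q:ℝ)/((Q:ℝ)+4⁻¹)) ^ ((d:ℝ)⁻¹)) d,
        ← Real.rpow_mul hbase0.le, inv_mul_cancel₀ (by exact_mod_cast hd.ne'), Real.rpow_one]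
    have ec4 : c4^d = (4:ℝ)^(m:ℕ) := by
      rw [hc4, ← Real.rpow_natCast ((4:ℝ) ^ ((m:ℝ)/d)) d, ← Real.rpow_mul (by norm_num),
        div_mul_cancel₀ _ (by exact_mod_cast hd.ne' : (d:ℝ) ≠ 0), Real.rpow_natCast]
    have eQ : ((Q:ℝ)^(-α))^d = (Q:ℝ)^(S-1) := by
      rw [← Real.rpow_natCast ((Q:ℝ)^(-α)) d, ← Real.rpow_mul hQ0.le]
      congr 1
      rw [hα]
      field_simp
      ring
    have e2 : ∏ j : Fin m, ((Q:ℝ) ^ (-(τ j)) / 4) = (Q:ℝ)^(-S) / (4:ℝ)^(m:ℕ) := by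
      rw [Finset.prod_div_distrib, Finset.prod_const, Finset.card_univ, Fintype.card_fin,
        ← Real.rpow_sum_of_pos hQ0]
      congr 2
      rw [hS, ← Finset.sum_neg_distrib]
    rw [e1, elam, ec4, eQ, e2]
    have hQm1 : (Q:ℝ)^(S-1) * ((Q:ℝ)^(-S)) = ((Q:ℝ))⁻¹ := by
      rw [← Real.rpow_add hQ0, show S - 1 + -S = (-1:ℝ) by ring, Real.rpow_neg_one]
    have h4m : ((4:ℝ)^(m:ℕ)) ≠ 0 := by positivity
    calc (1:ℝ) < (((Q:ℝ) + 2⁻¹)/((Q:ℝ)+4⁻¹)) := by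
          rw [lt_div_iff₀ (by positivity)]
          linarith
    _ = (((Q:ℝ) + 2⁻¹) * ((Q:ℝ)/((Q:ℝ)+4⁻¹) * (4:ℝ)^(m:ℕ) * (Q:ℝ)^(S-1)))
        * ((Q:ℝ)^(-S) / (4:ℝ)^(m:ℕ)) := by
          rw [show (((Q:ℝ) + 2⁻¹) * ((Q:ℝ)/((Q:ℝ)+4⁻¹) * (4:ℝ)^(m:ℕ) * (Q:ℝ)^(S-1)))
              * ((Q:ℝ)^(-S) / (4:ℝ)^(m:ℕ))
            = (((Q:ℝ)+2⁻¹) * ((Q:ℝ)/((Q:ℝ)+4⁻¹))) * ((4:ℝ)^(m:ℕ)/(4:ℝ)^(m:ℕ))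
              * ((Q:ℝ)^(S-1) * ((Q:ℝ)^(-S))) from by ring, hQm1, div_self h4m, mul_one]
          field_simp
    _ = _ := by ring
  -- apply the linear Dirichlet lemma
  obtain ⟨t, p, p', hne, hbt, hbu, hbw⟩ := dirichlet_linear d m x (fun j => f x j) g
    ((Q:ℝ) + 2⁻¹) (fun _ => lam * δ) (fun j => (Q:ℝ) ^ (-(τ j)) / 4)
    (by positivity) (fun i => by positivity)
    (fun j => by positivity) hvol
  simp only [hg] at hbw
  -- the main sufficiency argument, given a positive denominator
  have key : ∀ (t : ℤ) (p : Fin d → ℤ) (p' : Fin m → ℤ), 0 < t →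
      |(t : ℝ)| ≤ (Q:ℝ) + 2⁻¹ →
      (∀ i, |(t : ℝ) * x i - p i| ≤ lam * δ) →
      (∀ j, |(t : ℝ) * f x j + ∑ i, fderivWithin ℝ (fun y => f y j) U x (Pi.single i 1)
        * ((p i : ℝ) - t * x i) - p' j| ≤ (Q:ℝ) ^ (-(τ j)) / 4) →
      ∃ (p : Fin d → ℤ) (p' : Fin m → ℤ) (q : ℕ), 1 ≤ q ∧ q ≤ Q ∧
        (fun i : Fin d => (p i : ℝ) / q) ∈ U ∧
        (∀ i : Fin d, |x i - (p i : ℝ) / q| < c4 / (q * (Q : ℝ) ^ α)) ∧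
        (∀ j : Fin m, |f (fun i : Fin d => (p i : ℝ) / q) j - (p' j : ℝ) / q| <
          (q : ℝ) ^ (-(τ j) - 1) / 2) := by
    clear hne hbt hbu hbw
    intro t p p' ht hbt hbu hbw
    set q : ℕ := t.toNat with hqdef
    have hq1 : 1 ≤ q := by omega
    have hqt : ((q:ℕ):ℝ) = (t:ℝ) := by
      have : ((q:ℕ):ℤ) = t := by omega
      exact_mod_cast this
    have hq0R : (0:ℝ) < q := by exact_mod_cast hq1
    have hq1R : (1:ℝ) ≤ q := by exact_mod_cast hq1
    have hqQ : q ≤ Q := by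
      have h1 : (t:ℝ) ≤ (Q:ℝ) + 2⁻¹ := (abs_le.mp hbt).2
      have h2 : (t:ℝ) < (Q:ℝ) + 1 := by linarith
      have h3 : t < (Q:ℤ) + 1 := by exact_mod_cast h2
      omega
    set y : Fin d → ℝ := fun i => (p i : ℝ)/q with hy
    have hyd : ∀ i, y i - x i = ((p i : ℝ) - (t:ℝ) * x i)/(q:ℝ) := by
      intro i
      rw [hy, ← hqt]
      field_simp
    have hyix : ∀ i, |y i - x i| ≤ lam * δ / q := by
      intro i
      rw [hyd i, abs_div, abs_of_pos hq0R]
      have h1 : |(p i : ℝ) - (t:ℝ) * x i| ≤ lam * δ := by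
        rw [abs_sub_comm]
        exact hbu i
      gcongr
    have hlamδ : lam * δ ≤ δ := mul_le_of_le_one_left hδ0.le hlam1.le
    have hδq : lam * δ / q ≤ δ := le_trans (div_le_self (by positivity) hq1R) hlamδ
    have hnorm : ‖y - x‖ ≤ lam * δ / q := by
      rw [pi_norm_le_iff_of_nonneg (by positivity)]
      intro i
      simpa [Real.norm_eq_abs] using hyix i
    have hyball : y ∈ Metric.closedBall x r := by
      rw [Metric.mem_closedBall, dist_eq_norm]
      linarith
    have hyU : y ∈ U := hrU hyball
    have hQα0 : (0:ℝ) < (Q:ℝ) ^ α := Real.rpow_pos_of_pos hQ0 _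
    refine ⟨p, p', q, hq1, hqQ, hyU, ?_, ?_⟩
    · intro i
      have h1 : |x i - y i| ≤ lam * δ / q := by rw [abs_sub_comm]; exact hyix i
      have h2 : lam * δ / q < δ / q := by
        have hst : lam * δ < δ := mul_lt_of_lt_one_left hδ0 hlam1
        gcongr
      have h3 : δ/(q:ℝ) = c4 / (q * (Q:ℝ)^α) := by
        rw [hδ, Real.rpow_neg hQ0.le]
        field_simp
      calc |x i - y i| ≤ lam * δ / q := h1
      _ < δ / q := h2
      _ = c4 / (q * (Q:ℝ)^α) := h3
    · intro j
      have hφ : ContDiffOn ℝ 2 (fun z => f z j) U :=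
        (ContinuousLinearMap.proj j : (Fin m → ℝ) →L[ℝ] ℝ).contDiff.comp_contDiffOn hf
      have hCj : ∀ z ∈ U, ∀ (i k : Fin d),
          |fderivWithin ℝ (fun w => fderivWithin ℝ (fun z => f z j) U w (Pi.single i 1))
            U z (Pi.single k 1)| ≤ C := fun z hz i k => hC z hz i k j
      have htay := taylor_bound U hU (fun z => f z j) hφ C hC0 hCj x y r hrU hyball hx
      set G : Fin d → ℝ := fun i => fderivWithin ℝ (fun z => f z j) U x (Pi.single i 1) with hG
      set R : ℝ := f y j - f x j - ∑ i, G i * (y i - x i) with hR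
      -- bound on the remainder
      have hu : ‖y - x‖ ≤ δ / q := le_trans hnorm (by gcongr)
      have hRa : |R| ≤ C * d^2 * (δ/q) * (δ/q) := by
        have h0 : (0:ℝ) ≤ ‖y - x‖ := norm_nonneg _
        have := htay
        have hCd : (0:ℝ) ≤ C * d^2 := by positivity
        calc |R| ≤ (C * d^2 * ‖y - x‖) * ‖y - x‖ := htay
        _ ≤ (C * d^2 * (δ/q)) * (δ/q) :=
            mul_le_mul (mul_le_mul_of_nonneg_left hu hCd) hu h0 (by positivity)
        _ = C * d^2 * (δ/q) * (δ/q) := by ring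
      have hδsq : C * d^2 * (δ/q) * (δ/q)
          = K * ((Q:ℝ)^(-α) * (Q:ℝ)^(-α)) / ((q:ℝ)*q) := by
        rw [hK, hδ]
        field_simp
      rw [hδsq] at hRa
      have hQ2α0 : (0:ℝ) < (Q:ℝ)^(2*α) := Real.rpow_pos_of_pos hQ0 _
      have hQQ : (Q:ℝ)^(-α) * (Q:ℝ)^(-α) = ((Q:ℝ)^(2*α))⁻¹ := by
        rw [← Real.rpow_add hQ0, show -α + -α = -(2*α) by ring, Real.rpow_neg hQ0.le]
      have hKQ : K * ((Q:ℝ)^(-α) * (Q:ℝ)^(-α)) < 4⁻¹ := by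
        rw [hQQ]
        have h4 := mul_lt_mul_of_pos_right hQ2α (inv_pos.mpr hQ2α0)
        rw [mul_inv_cancel₀ hQ2α0.ne'] at h4
        linarith
      have hRb : |R| < 4⁻¹ / ((q:ℝ)*q) := by
        calc |R| ≤ K * ((Q:ℝ)^(-α) * (Q:ℝ)^(-α)) / ((q:ℝ)*q) := hRa
        _ < 4⁻¹ / ((q:ℝ)*q) := by gcongr
      have hτ1 : τ j ≤ 1 := by
        have := Finset.single_le_sum (f := τ) (fun k _ => (hτ k).le) (Finset.mem_univ j)
        rw [← hS] at this
        linarith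
      have hqm2 : (q:ℝ)^(-2:ℝ) = ((q:ℝ)*(q:ℝ))⁻¹ := by
        rw [Real.rpow_neg hq0R.le, show (2:ℝ) = ((2:ℕ):ℝ) by norm_num, Real.rpow_natCast,
          pow_two]
      have hq2 : ((q:ℝ)*(q:ℝ))⁻¹ ≤ (q:ℝ)^(-(τ j) - 1) := by
        rw [← hqm2]
        exact Real.rpow_le_rpow_of_exponent_le hq1R (by linarith)
      have hQτq : (Q:ℝ)^(-(τ j)) ≤ (q:ℝ)^(-(τ j)) :=
        Real.rpow_le_rpow_of_nonpos hq0R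
          (by exact_mod_cast Nat.cast_le.mpr hqQ) (by linarith [hτ j])
      have hqτ1 : (q:ℝ)^(-(τ j)) * ((q:ℝ))⁻¹ = (q:ℝ)^(-(τ j) - 1) := by
        rw [← Real.rpow_neg_one (q:ℝ), ← Real.rpow_add hq0R]
        congr 1
      have hsum_eq : ∑ i, G i * ((p i : ℝ) - (t:ℝ) * x i)
          = (q:ℝ) * ∑ i, G i * (y i - x i) := by
        rw [Finset.mul_sum]
        refine Finset.sum_congr rfl fun i _ => ?_
        rw [hyd i]
        field_simp
      have hdecomp : f y j - (p' j : ℝ)/(q:ℝ) = R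
          + ((t:ℝ) * f x j + ∑ i, G i * ((p i : ℝ) - (t:ℝ) * x i) - p' j)/(q:ℝ) := by
        rw [hsum_eq, hR, ← hqt]
        field_simp
        ring
      have hLq : |(t:ℝ) * f x j + ∑ i, G i * ((p i : ℝ) - (t:ℝ) * x i) - p' j|
          ≤ (Q:ℝ)^(-(τ j))/4 := hbw j
      have h_first : 4⁻¹/((q:ℝ)*q) ≤ (q:ℝ)^(-(τ j)-1)/4 := by
        calc 4⁻¹/((q:ℝ)*q) = ((q:ℝ)*q)⁻¹/4 := by ring
        _ ≤ (q:ℝ)^(-(τ j)-1)/4 := by linarith [hq2]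
      have h_second : ((Q:ℝ)^(-(τ j))/4)/(q:ℝ) ≤ (q:ℝ)^(-(τ j)-1)/4 := by
        calc ((Q:ℝ)^(-(τ j))/4)/(q:ℝ) = ((Q:ℝ)^(-(τ j))/(q:ℝ))/4 := by ring
        _ ≤ ((q:ℝ)^(-(τ j))/(q:ℝ))/4 := by gcongr
        _ = (q:ℝ)^(-(τ j)-1)/4 := by
              rw [div_eq_mul_inv ((q:ℝ)^(-(τ j))) (q:ℝ), hqτ1]
      show |f y j - (p' j : ℝ)/(q:ℝ)| < (q:ℝ)^(-(τ j) - 1)/2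
      calc |f y j - (p' j : ℝ)/(q:ℝ)|
          = |R + ((t:ℝ) * f x j + ∑ i, G i * ((p i : ℝ) - (t:ℝ) * x i) - p' j)/(q:ℝ)| := by
            rw [hdecomp]
      _ ≤ |R| + |((t:ℝ) * f x j + ∑ i, G i * ((p i : ℝ) - (t:ℝ) * x i) - p' j)/(q:ℝ)| :=
            abs_add_le _ _
      _ = |R| + |(t:ℝ) * f x j + ∑ i, G i * ((p i : ℝ) - (t:ℝ) * x i) - p' j|/(q:ℝ) := by
            rw [abs_div, abs_of_pos hq0R]
      _ < 4⁻¹/((q:ℝ)*q) + ((Q:ℝ)^(-(τ j))/4)/(q:ℝ) :=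
            add_lt_add_of_lt_of_le hRb (by gcongr)
      _ ≤ (q:ℝ)^(-(τ j)-1)/4 + (q:ℝ)^(-(τ j)-1)/4 := add_le_add h_first h_second
      _ = (q:ℝ)^(-(τ j) - 1)/2 := by ring
  rcases lt_trichotomy t 0 with htneg | htzero | htpos
  · -- negate the solution
    refine key (-t) (-p) (-p') (by omega) ?_ ?_ ?_
    · push_cast
      rwa [abs_neg]
    · intro i
      have := hbu i
      simp only [Pi.neg_apply]
      push_cast
      rw [show -(t:ℝ) * x i - (-(p i : ℝ)) = -((t:ℝ) * x i - (p i : ℝ)) by ring, abs_neg]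
      exact this
    · intro j
      have := hbw j
      simp only [Pi.neg_apply]
      push_cast
      rw [show -(t:ℝ) * f x j + ∑ i, fderivWithin ℝ (fun y => f y j) U x (Pi.single i 1)
          * (-(p i : ℝ) - -(t:ℝ) * x i) - (-(p' j : ℝ))
        = -((t:ℝ) * f x j + ∑ i, fderivWithin ℝ (fun y => f y j) U x (Pi.single i 1)
          * ((p i : ℝ) - (t:ℝ) * x i) - (p' j : ℝ)) by
          rw [show (∑ i, fderivWithin ℝ (fun y => f y j) U x (Pi.single i 1)
              * (-(p i : ℝ) - -(t:ℝ) * x i))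
            = ∑ i, -(fderivWithin ℝ (fun y => f y j) U x (Pi.single i 1)
              * ((p i : ℝ) - (t:ℝ) * x i)) from
            Finset.sum_congr rfl fun i _ => by ring, Finset.sum_neg_distrib]
          ring, abs_neg]
      exact this
  · -- all-zero case is impossible
    exfalso
    apply hne
    subst htzero
    have hp : p = 0 := by
      funext i
      have := hbu i
      rw [Int.cast_zero, zero_mul, zero_sub, abs_neg] at this
      have h1 : |(p i : ℝ)| < 1 := lt_of_le_of_lt this
        (lt_of_le_of_lt (mul_le_of_le_one_left hδ0.le hlam1.le) hδ1)
      have h2 : |p i| < 1 := by exact_mod_cast h1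
      rw [Int.abs_lt_one_iff] at h2
      simpa using h2
    have hp' : p' = 0 := by
      funext j
      have := hbw j
      rw [hp] at this
      simp only [Pi.zero_apply, Int.cast_zero, zero_mul, sub_zero, mul_zero,
        Finset.sum_const_zero, zero_add, zero_sub, abs_neg] at this
      have hQτ : (Q:ℝ) ^ (-(τ j)) ≤ 1 :=
        Real.rpow_le_one_of_one_le_of_nonpos (by exact_mod_cast hQ1) (by linarith [hτ j])
      have h1 : |(p' j : ℝ)| < 1 := by
        calc |(p' j : ℝ)| ≤ (Q:ℝ)^(-(τ j)) / 4 := this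
        _ ≤ 1/4 := by linarith
        _ < 1 := by norm_num
      have h2 : |p' j| < 1 := by exact_mod_cast h1
      rw [Int.abs_lt_one_iff] at h2
      simpa using h2
    exact ⟨rfl, hp, hp'⟩
  · exact key t p p' htpos hbt hbu hbw
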